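/- Let T be a tree rooted at r with bipartition {A,B}, and let x ∈ A be a vertex at maximum distance from r in T. For any odd positive integer k, x is a simple vertex in the split graph C_B(T^[k]) obtained from T^[k] by adding all edges between pairs of vertices of B. -/

import Mathlib

open SimpleGraph Set

/-- `f` given by endpoint functions `a`, `b` is an interval representation of `I`. -/
def IsIntervalRep {V : Type*} (I : SimpleGraph V) (a b : V → ℝ) : Prop :=
  (∀ v, a v ≤ b v) ∧
    ∀ u v, I.Adj u v ↔ u ≠ v ∧ (Set.Icc (a u) (b u) ∩ Set.Icc (a v) (b v)).Nonempty

/-- `I` is an interval graph. -/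
def IsIntervalGraph {V : Type*} (I : SimpleGraph V) : Prop :=
  ∃ a b : V → ℝ, IsIntervalRep I a b

/-- `G` is the intersection graph of axis-parallel `k`-dimensional boxes. -/
def IsBoxRep {V : Type*} (G : SimpleGraph V) (k : ℕ) : Prop :=
  ∃ lo hi : V → Fin k → ℝ, (∀ v i, lo v i ≤ hi v i) ∧
    ∀ u v, G.Adj u v ↔ u ≠ v ∧
      ∀ i, (Set.Icc (lo u i) (hi u i) ∩ Set.Icc (lo v i) (hi v i)).Nonempty

/-- The boxicity of a graph: the least `k` such that `G` is an intersection graph of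
axis-parallel `k`-dimensional boxes. -/
noncomputable def boxicity {V : Type*} (G : SimpleGraph V) : ℕ :=
  sInf {k | IsBoxRep G k}

/-- The `k`-th bipartite power of `G`: join vertices at odd distance at most `k`. -/
def bipartitePower {V : Type*} (G : SimpleGraph V) (k : ℕ) : SimpleGraph V :=
  SimpleGraph.fromRel (fun u v => Odd (G.dist u v) ∧ G.dist u v ≤ k)

/-- Add to `G` all edges between distinct vertices of `B`. -/
def addCliqueOn {V : Type*} (G : SimpleGraph V) (B : Set V) : SimpleGraph V :=
  SimpleGraph.fromRel (fun u v => G.Adj u v ∨ (u ∈ B ∧ v ∈ B))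

/-- `{A, B}` is a bipartition of `G`. -/
def IsBipartitionOf {V : Type*} (G : SimpleGraph V) (A B : Set V) : Prop :=
  Disjoint A B ∧ A ∪ B = Set.univ ∧ ∀ u v, G.Adj u v → (u ∈ A ↔ v ∈ B)

/-- `G` has no induced cycle of length greater than `m`. -/
def HasNoInducedCycleGT {V : Type*} (G : SimpleGraph V) (m : ℕ) : Prop :=
  ∀ n : ℕ, m < n → IsEmpty (SimpleGraph.cycleGraph n ↪g G)

/-- Chordal bipartite graphs: bipartite with no induced cycle of length > 4. -/
def ChordalBipartite {V : Type*} (G : SimpleGraph V) : Prop :=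
  (∃ A B : Set V, IsBipartitionOf G A B) ∧ HasNoInducedCycleGT G 4

/-- The closed neighbourhood `N[v]`. -/
def closedNbhd {V : Type*} (G : SimpleGraph V) (v : V) : Set V :=
  insert v (G.neighborSet v)

/-- Two vertices are compatible if one closed neighbourhood contains the other. -/
def Compatible {V : Type*} (G : SimpleGraph V) (u v : V) : Prop :=
  closedNbhd G u ⊆ closedNbhd G v ∨ closedNbhd G v ⊆ closedNbhd G u

/-- A vertex is simple if all pairs in its closed neighbourhood are compatible. -/
def IsSimpleVertex {V : Type*} (G : SimpleGraph V) (v : V) : Prop :=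
  ∀ x ∈ closedNbhd G v, ∀ y ∈ closedNbhd G v, Compatible G x y


open SimpleGraph Set

namespace TreeAux

variable {V : Type*} {T : SimpleGraph V}

lemma dist_getVert_le (hconn : T.Connected) {u v : V} (q : T.Walk u v) (i Δ : ℕ) :
    T.dist (q.getVert i) (q.getVert (i + Δ)) ≤ Δ := by
  induction Δ with
  | zero => simp
  | succ n ih =>
    have htri := hconn.dist_triangle (u := q.getVert i) (v := q.getVert (i+n))
      (w := q.getVert (i+(n+1)))
    have hstep : T.dist (q.getVert (i+n)) (q.getVert (i+(n+1))) ≤ 1 := by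
      by_cases h : i + n < q.length
      · have hadj : T.Adj (q.getVert (i+n)) (q.getVert (i+n+1)) := q.adj_getVert_succ h
        exact le_of_eq (dist_eq_one_iff_adj.mpr hadj)
      · have h1 : q.getVert (i+n) = v := q.getVert_of_length_le (by omega)
        have h2 : q.getVert (i+(n+1)) = v := q.getVert_of_length_le (by omega)
        rw [h1, h2]
        simp [SimpleGraph.dist_self]
    omega

end TreeAux

namespace TreeAux2
open SimpleGraph Walk
variable {V : Type*} {T : SimpleGraph V}

lemma getVert_one_takeUntil [DecidableEq V] {x a t : V} (p : T.Walk x a)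
    (ht : t ∈ p.support) (htx : t ≠ x) :
    (p.takeUntil t ht).getVert 1 = p.getVert 1 := by
  have hspec := p.take_spec ht
  have hlen : 1 ≤ (p.takeUntil t ht).length := by
    by_contra h
    push_neg at h
    have h0 : (p.takeUntil t ht).length = 0 := by omega
    exact htx (Walk.eq_of_length_eq_zero h0).symm
  conv_rhs => rw [← hspec]
  rw [Walk.getVert_append]
  by_cases h1 : 1 < (p.takeUntil t ht).length
  · simp [h1]
  · have hl : (p.takeUntil t ht).length = 1 := by omega
    rw [if_neg h1, hl, Nat.sub_self, Walk.getVert_zero, ← hl, Walk.getVert_length]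

lemma median (hT : T.IsTree) (x a b : V) :
    ∃ m : V, T.dist x a = T.dist x m + T.dist m a ∧ T.dist x b = T.dist x m + T.dist m b ∧
      T.dist a b = T.dist a m + T.dist m b := by
  classical
  have hconn := hT.isConnected
  suffices h : ∀ n (x : V), T.dist x a + T.dist x b ≤ n → ∃ m : V,
      T.dist x a = T.dist x m + T.dist m a ∧ T.dist x b = T.dist x m + T.dist m b ∧
      T.dist a b = T.dist a m + T.dist m b from h _ x le_rfl
  intro n
  induction n with
  | zero =>
    intro x hx
    have hxa : x = a := (hconn.dist_eq_zero_iff).mp (by omega)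
    subst hxa
    exact ⟨x, by simp [SimpleGraph.dist_self]⟩
  | succ n ih =>
    intro x hx
    by_cases hxa : T.dist x a = 0
    · have : x = a := (hconn.dist_eq_zero_iff).mp hxa
      subst this
      exact ⟨x, by simp [SimpleGraph.dist_self]⟩
    by_cases hxb : T.dist x b = 0
    · have : x = b := (hconn.dist_eq_zero_iff).mp hxb
      subst this
      refine ⟨x, by simp [SimpleGraph.dist_self, SimpleGraph.dist_comm]⟩
    obtain ⟨p, hp, hpl⟩ := hconn.exists_path_of_dist x a
    obtain ⟨q, hq, hql⟩ := hconn.exists_path_of_dist x b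
    have hpnil : ¬ p.Nil := by rw [Walk.nil_iff_length_eq]; omega
    have hqnil : ¬ q.Nil := by rw [Walk.nil_iff_length_eq]; omega
    have hyadj : T.Adj x (p.getVert 1) := p.adj_snd hpnil
    have hzadj : T.Adj x (q.getVert 1) := q.adj_snd hqnil
    set y := p.getVert 1 with hy
    set z := q.getVert 1 with hz
    by_cases hyz : y = z
    · -- recurse at y
      have hdxy : T.dist x y = 1 := dist_eq_one_iff_adj.mpr hyadj
      have hdxz : T.dist x z = 1 := dist_eq_one_iff_adj.mpr hzadj
      have hya : T.dist y a + 1 = T.dist x a := by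
        have h1 : T.dist y a ≤ p.tail.length := SimpleGraph.dist_le _
        have h2 : p.tail.length + 1 = p.length := Walk.length_tail_add_one hpnil
        have h3 : T.dist x a ≤ T.dist x y + T.dist y a := hconn.dist_triangle
        omega
      have hzb : T.dist z b + 1 = T.dist x b := by
        have h1 : T.dist z b ≤ q.tail.length := SimpleGraph.dist_le _
        have h2 : q.tail.length + 1 = q.length := Walk.length_tail_add_one hqnil
        have h3 : T.dist x b ≤ T.dist x z + T.dist z b := hconn.dist_triangle
        omega
      have hyb : T.dist y b + 1 = T.dist x b := by rw [hyz]; exact hzb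
      obtain ⟨m, hm1, hm2, hm3⟩ := ih y (by omega)
      refine ⟨m, ?_, ?_, hm3⟩
      · have t1 : T.dist x m ≤ T.dist x y + T.dist y m := hconn.dist_triangle
        have t2 : T.dist x a ≤ T.dist x m + T.dist m a := hconn.dist_triangle
        omega
      · have t1 : T.dist x m ≤ T.dist x y + T.dist y m := hconn.dist_triangle
        have t2 : T.dist x b ≤ T.dist x m + T.dist m b := hconn.dist_triangle
        omega
    · -- different first steps: x is the median
      have hshared : ∀ t, t ∈ p.support → t ∈ q.support → t = x := by
        intro t h1 h2
        by_contra htx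
        have e1 : (p.takeUntil t h1).getVert 1 = y := getVert_one_takeUntil p h1 htx
        have e2 : (q.takeUntil t h2).getVert 1 = z := getVert_one_takeUntil q h2 htx
        have hupq : (⟨p.takeUntil t h1, hp.takeUntil h1⟩ : T.Path x t) =
            ⟨q.takeUntil t h2, hq.takeUntil h2⟩ := hT.IsAcyclic.path_unique _ _
        have : p.takeUntil t h1 = q.takeUntil t h2 := congrArg Subtype.val hupq
        exact hyz (by rw [← e1, ← e2, this])
      have hwpath : (p.reverse.append q).IsPath := by
        rw [Walk.isPath_def, Walk.support_append, Walk.support_reverse]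
        refine List.Nodup.append (List.nodup_reverse.mpr hp.support_nodup) (hq.support_nodup.tail) ?_
        intro t ht1 ht2
        have ht1' : t ∈ p.support := List.mem_reverse.mp ht1
        have ht2' : t ∈ q.support := by
          rw [q.support_eq_cons]
          exact List.mem_cons_of_mem _ ht2
        have : t = x := hshared t ht1' ht2'
        subst this
        have : q.support.Nodup := hq.support_nodup
        rw [q.support_eq_cons] at this
        exact (List.nodup_cons.mp this).1 ht2
      obtain ⟨w0, hw0, hw0l⟩ := hconn.exists_path_of_dist a b
      have huniq : (⟨p.reverse.append q, hwpath⟩ : T.Path a b) = ⟨w0, hw0⟩ :=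
        hT.IsAcyclic.path_unique _ _
      have hval : p.reverse.append q = w0 := congrArg Subtype.val huniq
      have hlen : (p.reverse.append q).length = w0.length := congrArg Walk.length hval
      rw [Walk.length_append, Walk.length_reverse, hpl, hql, hw0l] at hlen
      refine ⟨x, by simp [SimpleGraph.dist_self], by simp [SimpleGraph.dist_self], ?_⟩
      rw [SimpleGraph.dist_comm (u := a) (v := x)]
      omega

end TreeAux2

namespace TreeAux3
open SimpleGraph Walk TreeAux TreeAux2
variable {V : Type*} {T : SimpleGraph V}

lemma getVert_between (hT : T.IsTree) {x c m : V} (q : T.Walk x c)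
    (hql : q.length = T.dist x c) (h : T.dist x m + T.dist m c = T.dist x c) :
    q.getVert (T.dist x m) = m := by
  have hconn := hT.isConnected
  obtain ⟨p1, hp1, hp1l⟩ := hconn.exists_path_of_dist x m
  obtain ⟨p2, hp2, hp2l⟩ := hconn.exists_path_of_dist m c
  have hwl : (p1.append p2).length = T.dist x c := by
    rw [Walk.length_append]; omega
  have hwp : (p1.append p2).IsPath := (p1.append p2).isPath_of_length_eq_dist hwl
  have hqp : q.IsPath := q.isPath_of_length_eq_dist hql
  have huniq : (⟨p1.append p2, hwp⟩ : T.Path x c) = ⟨q, hqp⟩ := hT.IsAcyclic.path_unique _ _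
  have hval : p1.append p2 = q := congrArg Subtype.val huniq
  rw [← hval, Walk.getVert_append, hp1l, if_neg (lt_irrefl _), Nat.sub_self,
    Walk.getVert_zero]

lemma gp (hT : T.IsTree) (x a c b : V) : ∃ i1 i2 : ℕ,
    T.dist x a + T.dist x c = T.dist a c + 2 * i1 ∧
    T.dist x c + T.dist x b = T.dist c b + 2 * i2 ∧
    T.dist a b + 2 * min i1 i2 ≤ T.dist x a + T.dist x b := by
  have hconn := hT.isConnected
  obtain ⟨m1, ha1, hc1, hac⟩ := median hT x a c
  obtain ⟨m2, hb2, hc2, hbc⟩ := median hT x b c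
  refine ⟨T.dist x m1, T.dist x m2, ?_, ?_, ?_⟩
  · have e1 : T.dist a m1 = T.dist m1 a := SimpleGraph.dist_comm ..
    omega
  · have e1 : T.dist b m2 = T.dist m2 b := SimpleGraph.dist_comm ..
    have e2 : T.dist c b = T.dist b c := SimpleGraph.dist_comm ..
    omega
  · obtain ⟨q, hq, hql⟩ := hconn.exists_path_of_dist x c
    have pos1 : q.getVert (T.dist x m1) = m1 := getVert_between hT q hql (by omega)
    have pos2 : q.getVert (T.dist x m2) = m2 := getVert_between hT q hql (by omega)
    have t1 : T.dist a b ≤ T.dist a m1 + T.dist m1 b := hconn.dist_triangle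
    have t2 : T.dist m1 b ≤ T.dist m1 m2 + T.dist m2 b := hconn.dist_triangle
    have e1 : T.dist a m1 = T.dist m1 a := SimpleGraph.dist_comm ..
    rcases le_total (T.dist x m1) (T.dist x m2) with h | h
    · have hgv := dist_getVert_le hconn q (T.dist x m1) (T.dist x m2 - T.dist x m1)
      rw [show T.dist x m1 + (T.dist x m2 - T.dist x m1) = T.dist x m2 from by omega,
        pos1, pos2] at hgv
      omega
    · have hgv := dist_getVert_le hconn q (T.dist x m2) (T.dist x m1 - T.dist x m2)
      rw [show T.dist x m2 + (T.dist x m1 - T.dist x m2) = T.dist x m1 from by omega,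
        pos2, pos1] at hgv
      have e2 : T.dist m2 m1 = T.dist m1 m2 := SimpleGraph.dist_comm ..
      omega

lemma ball_nested (hT : T.IsTree) {r x u v w : V} (k : ℕ)
    (hfarw : T.dist r w ≤ T.dist r x) (hu : T.dist x u ≤ k) (hv : T.dist x v ≤ k)
    (hrv : T.dist r v ≤ T.dist r u) (hw : T.dist u w ≤ k) : T.dist v w ≤ k := by
  obtain ⟨i1, i2, e1, e2, e3⟩ := gp hT x v r w
  obtain ⟨j1, j2, f1, f2, f3⟩ := gp hT x u w r
  have c1 : T.dist r w = T.dist w r := SimpleGraph.dist_comm ..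
  have c2 : T.dist r x = T.dist x r := SimpleGraph.dist_comm ..
  have c3 : T.dist r v = T.dist v r := SimpleGraph.dist_comm ..
  have c4 : T.dist r u = T.dist u r := SimpleGraph.dist_comm ..
  have c5 : T.dist w r = T.dist r w := SimpleGraph.dist_comm ..
  omega

end TreeAux3

namespace TreeAux4
open SimpleGraph Walk
variable {V : Type*} {T : SimpleGraph V} {A B : Set V}

lemma walkParity (hdis : Disjoint A B) (huniv : A ∪ B = Set.univ)
    (hadj : ∀ u v, T.Adj u v → (u ∈ A ↔ v ∈ B)) {u v : V} (w : T.Walk u v) :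
    Even w.length ↔ (u ∈ B ↔ v ∈ B) := by
  have hA : ∀ y, y ∈ A ↔ y ∉ B := by
    intro y
    have h1 : y ∈ A ∪ B := huniv.symm ▸ Set.mem_univ y
    exact ⟨fun h hb => Set.disjoint_left.mp hdis h hb, fun h => h1.resolve_right h⟩
  induction w with
  | nil => simp
  | @cons u u' v h p ih =>
    have h1 := hadj u u' h
    have h2 := hA u
    rw [Walk.length_cons, Nat.even_add_one]
    tauto

lemma dist_parity (hconn : T.Connected) (hdis : Disjoint A B) (huniv : A ∪ B = Set.univ)
    (hadj : ∀ u v, T.Adj u v → (u ∈ A ↔ v ∈ B)) (u v : V) :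
    Odd (T.dist u v) ↔ ¬(u ∈ B ↔ v ∈ B) := by
  obtain ⟨w, hw⟩ := (hconn u v).exists_walk_length_eq_dist
  rw [← hw, ← Nat.not_even_iff_odd, walkParity hdis huniv hadj w]

end TreeAux4

theorem stmt1 {V : Type*} (T : SimpleGraph V) (hT : T.IsTree) (r : V) (A B : Set V)
    (hbip : IsBipartitionOf T A B) (x : V) (hxA : x ∈ A)
    (hfar : ∀ w : V, T.dist r w ≤ T.dist r x) (k : ℕ) (hk : Odd k) (hk0 : 0 < k) :
    IsSimpleVertex (addCliqueOn (bipartitePower T k) B) x := by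
  classical
  obtain ⟨hdis, huniv, hadjbip⟩ := hbip
  have hconn := hT.isConnected
  set G := addCliqueOn (bipartitePower T k) B with hG
  have hpar : ∀ y z : V, Odd (T.dist y z) ↔ ¬(y ∈ B ↔ z ∈ B) :=
    TreeAux4.dist_parity hconn hdis huniv hadjbip
  have hadjG : ∀ y z : V, G.Adj y z ↔
      y ≠ z ∧ ((Odd (T.dist y z) ∧ T.dist y z ≤ k) ∨ (y ∈ B ∧ z ∈ B)) := by
    intro y z
    have hc : T.dist z y = T.dist y z := SimpleGraph.dist_comm ..
    simp only [hG, addCliqueOn, bipartitePower, fromRel_adj, hc]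
    tauto
  have hmem : ∀ y z : V, y ∈ closedNbhd G z ↔ y = z ∨ G.Adj z y := by
    intro y z
    simp [closedNbhd]
  have hxB : x ∉ B := Set.disjoint_left.mp hdis hxA
  -- neighbors of x are in B at odd distance ≤ k
  have hnx : ∀ y, y ∈ closedNbhd G x → y ≠ x → (y ∈ B ∧ T.dist x y ≤ k) := by
    intro y hy hyx
    rcases (hmem y x).mp hy with h | h
    · exact absurd h hyx
    · rcases ((hadjG x y).mp h).2 with ⟨ho, hk'⟩ | ⟨hxB', _⟩
      · have := (hpar x y).mp ho
        exact ⟨by tauto, hk'⟩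
      · exact absurd hxB' hxB
  -- the key nesting claim
  have key : ∀ u' v', u' ∈ B → v' ∈ B → T.dist x u' ≤ k → T.dist x v' ≤ k →
      T.dist r v' ≤ T.dist r u' → closedNbhd G u' ⊆ closedNbhd G v' := by
    intro u' v' huB hvB hku hkv hle y hy
    rcases (hmem y u').mp hy with rfl | hadj
    · by_cases huv : y = v'
      · exact (hmem y v').mpr (Or.inl huv)
      · refine (hmem y v').mpr (Or.inr ((hadjG v' y).mpr ⟨fun h => huv h.symm, Or.inr ⟨hvB, huB⟩⟩))
    · rcases ((hadjG u' y).mp hadj).2 with ⟨ho, hk'⟩ | ⟨_, hyB⟩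
      · have hyB : y ∉ B := by
          have := (hpar u' y).mp ho
          tauto
        have hdvy : T.dist v' y ≤ k :=
          TreeAux3.ball_nested hT k (hfar y) hku hkv hle hk'
        have hov : Odd (T.dist v' y) := (hpar v' y).mpr (by tauto)
        have hne : v' ≠ y := fun h => hyB (h ▸ hvB)
        exact (hmem y v').mpr (Or.inr ((hadjG v' y).mpr ⟨hne, Or.inl ⟨hov, hdvy⟩⟩))
      · by_cases hyv : y = v'
        · exact (hmem y v').mpr (Or.inl hyv)
        · exact (hmem y v').mpr (Or.inr ((hadjG v' y).mpr
            ⟨fun h => hyv h.symm, Or.inr ⟨hvB, hyB⟩⟩))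
  -- compatibility with x itself
  have hcx : ∀ v', v' ∈ closedNbhd G x → Compatible G x v' := by
    intro v' hv'
    by_cases hvx : v' = x
    · subst hvx
      exact Or.inl (subset_refl _)
    · obtain ⟨hvB, hkv⟩ := hnx v' hv' hvx
      left
      intro y hy
      rcases (hmem y x).mp hy with hyeq | hadj
      · subst hyeq
        refine (hmem y v').mpr (Or.inr ?_)
        rcases (hmem v' y).mp hv' with h | h
        · exact absurd h hvx
        · exact h.symm
      · have hyx : y ≠ x := fun h => by
          subst h
          exact (G.loopless.irrefl y) hadj
        obtain ⟨hyB, _⟩ := hnx y ((hmem y x).mpr (Or.inr hadj)) hyx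
        by_cases hyv : y = v'
        · exact (hmem y v').mpr (Or.inl hyv)
        · exact (hmem y v').mpr (Or.inr ((hadjG v' y).mpr
            ⟨fun h => hyv h.symm, Or.inr ⟨hvB, hyB⟩⟩))
  intro u hu v hv
  by_cases hux : u = x
  · subst hux
    exact hcx v hv
  by_cases hvx : v = x
  · subst hvx
    rcases hcx u hu with h | h
    · exact Or.inr h
    · exact Or.inl h
  obtain ⟨huB, hku⟩ := hnx u hu hux
  obtain ⟨hvB, hkv⟩ := hnx v hv hvx
  rcases le_total (T.dist r v) (T.dist r u) with hle | hle
  · exact Or.inl (key u v huB hvB hku hkv hle)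
  · exact Or.inr (key v u hvB huB hkv hku hle)
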